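/- Let d = 3m with m ≥ 2 and λ ∈ ℂ with λ ≠ 0 and λ³ ≠ 1. Then the transformations [ζ³X, Y, Z], [X, ζ³Y, Z], [ζX, ζ^{-1}Y, Z], [Y,Z,X], and [X,Z,Y] (ζ a primitive d-th root of unity) each preserve the polynomial X^{3m} + Y^{3m} + Z^{3m} − 3λ X^m Y^m Z^m up to a nonzero scalar, and they generate a subgroup of PGL(3,ℂ) of order 2d². -/

import Mathlib

open MvPolynomial Matrix

/-- Action of a `3×3` matrix on polynomials by linear substitution of coordinates. -/
noncomputable def actOn (M : Matrix (Fin 3) (Fin 3) ℂ) (F : MvPolynomial (Fin 3) ℂ) :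
    MvPolynomial (Fin 3) ℂ :=
  MvPolynomial.bind₁ (fun i => ∑ j, MvPolynomial.C (M i j) * MvPolynomial.X j) F

/-- `PGL(3, ℂ)`. -/
abbrev PGL3 := GL (Fin 3) ℂ ⧸ Subgroup.center (GL (Fin 3) ℂ)

noncomputable def toPGL3 : GL (Fin 3) ℂ →* PGL3 := QuotientGroup.mk' _

open Multiplicative

/-- Permutation action on triples. -/
def permAct (d : ℕ) : Equiv.Perm (Fin 3) →* MulAut (Fin 3 → Multiplicative (ZMod d)) where
  toFun σ :=
    { toFun := fun v => v ∘ ⇑σ⁻¹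
      invFun := fun v => v ∘ ⇑σ
      left_inv := fun v => by funext i; simp
      right_inv := fun v => by funext i; simp
      map_mul' := fun v w => rfl }
  map_one' := by ext v i; simp
  map_mul' := fun σ τ => by ext v i; simp [Function.comp]

abbrev A3 (d : ℕ) : Type := (Fin 3 → Multiplicative (ZMod d)) ⋊[permAct d] Equiv.Perm (Fin 3)

noncomputable def chi (d : ℕ) (ζ : ℂ) (a : ZMod d) : ℂ := ζ ^ a.val

lemma chi_zero (d : ℕ) [NeZero d] (ζ : ℂ) : chi d ζ 0 = 1 := by simp [chi]

lemma pow_mod (d : ℕ) (ζ : ℂ) (hz : ζ ^ d = 1) (x : ℕ) : ζ ^ (x % d) = ζ ^ x := by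
  conv_rhs => rw [← Nat.div_add_mod x d]
  rw [pow_add, pow_mul, hz, one_pow, one_mul]

lemma chi_add (d : ℕ) [NeZero d] (ζ : ℂ) (hz : ζ ^ d = 1) (a b : ZMod d) :
    chi d ζ (a + b) = chi d ζ a * chi d ζ b := by
  rw [chi, chi, chi, ZMod.val_add, pow_mod d ζ hz, pow_add]

lemma chi_ne_zero (d : ℕ) (ζ : ℂ) (hd : d ≠ 0) (hz : ζ ^ d = 1) (a : ZMod d) :
    chi d ζ a ≠ 0 := by
  have : ζ ≠ 0 := by
    intro h; rw [h, zero_pow hd] at hz; exact zero_ne_one hz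
  exact pow_ne_zero _ this

/-- The monomial matrix attached to an element of `A3 d`. -/
noncomputable def mmat (d : ℕ) [NeZero d] (ζ : ℂ) (hz : ζ ^ d = 1) :
    A3 d →* Matrix (Fin 3) (Fin 3) ℂ where
  toFun x := Matrix.of fun i j => if x.right j = i then chi d ζ (toAdd (x.left i)) else 0
  map_one' := by
    ext i j
    simp only [Matrix.of_apply, Matrix.one_apply]
    by_cases h : i = j <;> simp [h, chi_zero, eq_comm]
  map_mul' := fun x y => by
    ext i j
    rw [Matrix.mul_apply, Finset.sum_eq_single (y.right j)]
    · simp only [Matrix.of_apply, SemidirectProduct.mul_left, SemidirectProduct.mul_right,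
        Equiv.Perm.mul_apply, if_pos rfl]
      by_cases h : x.right (y.right j) = i
      · simp only [h, eq_self_iff_true, if_true]
        have h2 : x.right⁻¹ i = y.right j := by rw [← h]; simp
        simp only [Pi.mul_apply, toAdd_mul]
        rw [chi_add d ζ hz]
        congr 2
        show toAdd ((y.left ∘ ⇑x.right⁻¹) i) = _
        rw [Function.comp_apply, h2]
      · simp only [h, if_false, zero_mul]
    · intro k _ hk
      simp only [Matrix.of_apply]
      rw [if_neg (Ne.symm hk), mul_zero]
    · intro h; exact absurd (Finset.mem_univ _) h

noncomputable def PhiGL (d : ℕ) [NeZero d] (ζ : ℂ) (hz : ζ ^ d = 1) : A3 d →* GL (Fin 3) ℂ :=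
  (mmat d ζ hz).toHomUnits

lemma PhiGL_coe (d : ℕ) [NeZero d] (ζ : ℂ) (hz : ζ ^ d = 1) (x : A3 d) :
    ((PhiGL d ζ hz x : GL (Fin 3) ℂ) : Matrix (Fin 3) (Fin 3) ℂ) = mmat d ζ hz x :=
  (mmat d ζ hz).coe_toHomUnits x

/-- The sum-of-exponents mod 3 homomorphism. -/
def sHom (d : ℕ) (h3 : (3 : ℕ) ∣ d) : A3 d →* Multiplicative (ZMod 3) where
  toFun x := ofAdd (ZMod.castHom h3 (ZMod 3) (∑ i, toAdd (x.left i)))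
  map_one' := by simp
  map_mul' := fun x y => by
    have hs : (∑ i, toAdd ((x * y).left i)) = (∑ i, toAdd (x.left i)) + ∑ i, toAdd (y.left i) := by
      show (∑ i, toAdd ((x.left * (permAct d x.right) y.left) i)) = _
      simp only [Pi.mul_apply, toAdd_mul]
      rw [Finset.sum_add_distrib]
      congr 1
      show (∑ i, toAdd ((y.left ∘ ⇑x.right⁻¹) i)) = _
      exact Equiv.sum_comp (x.right⁻¹) (fun i => toAdd (y.left i))
    show ofAdd _ = _
    rw [hs, ← ofAdd_add, ← map_add]

lemma GL3_center_iff (x : GL (Fin 3) ℂ) :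
    x ∈ Subgroup.center (GL (Fin 3) ℂ) ↔
      ∃ c : ℂ, (x : Matrix (Fin 3) (Fin 3) ℂ) = c • (1 : Matrix (Fin 3) (Fin 3) ℂ) := by
  constructor
  · intro h
    have hcomm : ∀ i j : Fin 3, i ≠ j →
        Commute (single i j (1:ℂ)) (x : Matrix (Fin 3) (Fin 3) ℂ) := by
      intro i j hij
      have hdet : (Matrix.transvection i j (1:ℂ)).det ≠ 0 := by
        rw [Matrix.det_transvection_of_ne i j hij]; exact one_ne_zero
      set T : GL (Fin 3) ℂ := Matrix.GeneralLinearGroup.mkOfDetNeZero _ hdet with hT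
      have h1 : T * x = x * T := Subgroup.mem_center_iff.mp h T
      have h2 : (T : Matrix (Fin 3) (Fin 3) ℂ) * x = (x : Matrix (Fin 3) (Fin 3) ℂ) * T := by
        exact_mod_cast congrArg Units.val h1
      have hTc : (T : Matrix (Fin 3) (Fin 3) ℂ) = Matrix.transvection i j (1:ℂ) := rfl
      rw [hTc, Matrix.transvection, add_mul, mul_add, one_mul, mul_one] at h2
      exact add_left_cancel h2
    obtain ⟨c, hc⟩ := mem_range_scalar_of_commute_single hcomm
    refine ⟨c, ?_⟩
    rw [← hc]
    ext i j
    by_cases h : i = j <;>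
      simp [Matrix.scalar_apply, Matrix.smul_apply, Matrix.one_apply, h]
  · rintro ⟨c, hc⟩
    rw [Subgroup.mem_center_iff]
    intro g
    apply Units.ext
    show (g : Matrix (Fin 3) (Fin 3) ℂ) * x = (x : Matrix (Fin 3) (Fin 3) ℂ) * g
    rw [hc, mul_smul_comm, smul_mul_assoc, mul_one, one_mul]

noncomputable def toPGL3' : GL (Fin 3) ℂ →* PGL3 := toPGL3

def ofv (d : ℕ) (v : Fin 3 → ZMod d) : A3 d := SemidirectProduct.inl (fun i => ofAdd (v i))

lemma ker_iff (d : ℕ) [NeZero d] (ζ : ℂ) (hζ : IsPrimitiveRoot ζ d) (hz : ζ ^ d = 1)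
    (x : A3 d) :
    (toPGL3'.comp (PhiGL d ζ hz)) x = 1 ↔ ∃ a : ZMod d, x = ofv d (fun _ => a) := by
  have hd0 : d ≠ 0 := NeZero.ne d
  constructor
  · intro h
    have hc : PhiGL d ζ hz x ∈ Subgroup.center (GL (Fin 3) ℂ) := by
      rw [MonoidHom.comp_apply] at h
      exact (QuotientGroup.eq_one_iff _).mp h
    obtain ⟨c, hc⟩ := (GL3_center_iff _).mp hc
    rw [PhiGL_coe] at hc
    -- the permutation must be trivial
    have hσ : ∀ j, x.right j = j := by
      intro j
      by_contra hne
      have h1 : mmat d ζ hz x (x.right j) j = chi d ζ (toAdd (x.left (x.right j))) := by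
        simp [mmat]
      have h2 : (c • (1 : Matrix (Fin 3) (Fin 3) ℂ)) (x.right j) j = 0 := by
        simp [Matrix.smul_apply, Matrix.one_apply, hne]
      rw [hc] at h1
      rw [h1] at h2
      exact chi_ne_zero d ζ hd0 hz _ h2
    -- diagonal entries all equal
    have hdiag : ∀ i : Fin 3, chi d ζ (toAdd (x.left i)) = c := by
      intro i
      have h1 : mmat d ζ hz x i i = chi d ζ (toAdd (x.left i)) := by
        simp [mmat, hσ i]
      have h2 : (c • (1 : Matrix (Fin 3) (Fin 3) ℂ)) i i = c := by
        simp [Matrix.smul_apply, Matrix.one_apply]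
      rw [hc] at h1; rw [h1] at h2; exact h2
    have hv : ∀ i : Fin 3, x.left i = x.left 0 := by
      intro i
      have := (hdiag i).trans (hdiag 0).symm
      have hval : (toAdd (x.left i)).val = (toAdd (x.left 0)).val :=
        hζ.pow_inj (ZMod.val_lt _) (ZMod.val_lt _) this
      have := ZMod.val_injective d hval
      exact toAdd.injective this
    refine ⟨toAdd (x.left 0), ?_⟩
    have hxr : x.right = 1 := Equiv.ext fun j => hσ j
    apply SemidirectProduct.ext
    · funext i
      exact hv i
    · exact hxr
  · rintro ⟨a, rfl⟩
    rw [MonoidHom.comp_apply, toPGL3', toPGL3]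
    rw [QuotientGroup.mk'_apply, QuotientGroup.eq_one_iff]
    rw [GL3_center_iff, PhiGL_coe]
    refine ⟨chi d ζ a, ?_⟩
    ext i j
    by_cases h : i = j <;> simp [mmat, ofv, Matrix.smul_apply, Matrix.one_apply, h, eq_comm]

def c4 : Equiv.Perm (Fin 3) := (finRotate 3)⁻¹
def s5 : Equiv.Perm (Fin 3) := Equiv.swap 1 2

lemma ofv_add (d : ℕ) (v w : Fin 3 → ZMod d) : ofv d (v + w) = ofv d v * ofv d w := by
  unfold ofv
  rw [← _root_.map_mul]
  congr 1

lemma ofv_nsmul (d : ℕ) (n : ℕ) (v : Fin 3 → ZMod d) : ofv d (n • v) = ofv d v ^ n := by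
  induction n with
  | zero => simp [ofv]; rfl
  | succ k ih => rw [succ_nsmul, ofv_add, ih, pow_succ]

lemma exists_three_mul (d : ℕ) [NeZero d] (h3 : (3:ℕ) ∣ d) (x : ZMod d)
    (h : ZMod.castHom h3 (ZMod 3) x = 0) : ∃ k : ZMod d, x = 3 * k := by
  have h1 : ((x.val : ℕ) : ZMod 3) = 0 := by
    rw [ZMod.natCast_val]
    rwa [ZMod.castHom_apply] at h
  have h2 : (3:ℕ) ∣ x.val := (ZMod.natCast_eq_zero_iff _ _).mp h1
  obtain ⟨t, ht⟩ := h2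
  refine ⟨(t : ZMod d), ?_⟩
  have : ((x.val : ℕ) : ZMod d) = x := by
    rw [ZMod.natCast_val, ZMod.cast_id]
  rw [← this, ht]
  push_cast
  ring

lemma closure_eq_ker (d : ℕ) [NeZero d] (h3 : (3:ℕ) ∣ d) :
    Subgroup.closure {ofv d ![3,0,0], ofv d ![0,3,0], ofv d ![1,-1,0],
      SemidirectProduct.inr c4, SemidirectProduct.inr s5} = (sHom d h3).ker := by
  have cast3 : ZMod.castHom h3 (ZMod 3) (3 : ZMod d) = 0 := by
    have h : ((3:ℕ) : ZMod d) = (3:ZMod d) := by norm_cast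
    rw [← h, map_natCast]
    decide
  apply le_antisymm
  · rw [Subgroup.closure_le]
    rintro x (rfl | rfl | rfl | rfl | rfl) <;>
    · show sHom d h3 _ = 1
      simp only [sHom, ofv, MonoidHom.coe_mk, OneHom.coe_mk, SemidirectProduct.left_inl,
        SemidirectProduct.left_inr, toAdd_ofAdd, Fin.sum_univ_three, ofAdd_eq_one,
        Matrix.cons_val_zero, Matrix.cons_val_one, Matrix.head_cons, Matrix.cons_val_two,
        Matrix.tail_cons, toAdd_one, Pi.one_apply]
      first
        | (rw [add_zero, add_zero, cast3])
        | (rw [zero_add, add_zero, cast3])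
        | (rw [show (1 : ZMod d) + (-1) + 0 = 0 by ring, map_zero])
        | (rw [add_zero, add_zero, map_zero])
  · intro x hx
    set S : Set (A3 d) := {ofv d ![3,0,0], ofv d ![0,3,0], ofv d ![1,-1,0],
      SemidirectProduct.inr c4, SemidirectProduct.inr s5} with hS
    have m1 : ofv d ![3,0,0] ∈ Subgroup.closure S := Subgroup.subset_closure (by simp [hS])
    have m3 : ofv d ![1,-1,0] ∈ Subgroup.closure S := Subgroup.subset_closure (by simp [hS])
    have m4 : SemidirectProduct.inr (φ := permAct d) c4 ∈ Subgroup.closure S :=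
      Subgroup.subset_closure (by simp [hS])
    have m5 : SemidirectProduct.inr (φ := permAct d) s5 ∈ Subgroup.closure S :=
      Subgroup.subset_closure (by simp [hS])
    have hperm : ∀ σ : Equiv.Perm (Fin 3),
        SemidirectProduct.inr (φ := permAct d) σ ∈ Subgroup.closure S := by
      intro σ
      have h6 : σ = 1 ∨ σ = c4 ∨ σ = c4*c4 ∨ σ = s5 ∨ σ = c4*s5 ∨ σ = c4*c4*s5 := by
        revert σ; decide
      rcases h6 with rfl | rfl | rfl | rfl | rfl | rfl
      · rw [_root_.map_one]; exact Subgroup.one_mem _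
      · exact m4
      · rw [_root_.map_mul]; exact Subgroup.mul_mem _ m4 m4
      · exact m5
      · rw [_root_.map_mul]; exact Subgroup.mul_mem _ m4 m5
      · rw [_root_.map_mul, _root_.map_mul]
        exact Subgroup.mul_mem _ (Subgroup.mul_mem _ m4 m4) m5
    -- the conjugate generator
    have m3' : ofv d ![-1,0,1] ∈ Subgroup.closure S := by
      have key : ofv d ![-1,0,1] =
          SemidirectProduct.inr (φ := permAct d) c4 *
            SemidirectProduct.inl (fun i => ofAdd (![(1:ZMod d),-1,0] i)) *
            SemidirectProduct.inr (φ := permAct d) c4⁻¹ := by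
        rw [← SemidirectProduct.inl_aut]
        unfold ofv
        congr 1
        funext i
        fin_cases i <;> rfl
      rw [key]
      refine Subgroup.mul_mem _ (Subgroup.mul_mem _ m4 m3) ?_
      rw [show SemidirectProduct.inr (φ := permAct d) c4⁻¹ =
        (SemidirectProduct.inr (φ := permAct d) c4)⁻¹ from map_inv _ _]
      exact Subgroup.inv_mem _ m4
    -- decompose x
    set v : Fin 3 → ZMod d := fun i => toAdd (x.left i) with hv
    have hsum : ZMod.castHom h3 (ZMod 3) (v 0 + v 1 + v 2) = 0 := by
      have : sHom d h3 x = 1 := hx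
      simp only [sHom, MonoidHom.coe_mk, OneHom.coe_mk, Fin.sum_univ_three] at this
      exact ofAdd_eq_one.mp this
    obtain ⟨k, hk⟩ := exists_three_mul d h3 _ hsum
    have hofv : ofv d v ∈ Subgroup.closure S := by
      have hc : ∀ z : ZMod d, ((z.val : ℕ) : ZMod d) = z := fun z => by
        rw [ZMod.natCast_val, ZMod.cast_id]
      have e0 : v 0 = (-(v 1)).val • (1:ZMod d) + (v 2).val • (-1:ZMod d) + k.val • (3:ZMod d) := by
        simp only [smul_eq_mul, nsmul_eq_mul, hc]
        linear_combination hk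
      have e1 : v 1 = (-(v 1)).val • (-1:ZMod d) + (v 2).val • (0:ZMod d) + k.val • (0:ZMod d) := by
        simp only [smul_eq_mul, nsmul_eq_mul, hc]
        ring
      have e2 : v 2 = (-(v 1)).val • (0:ZMod d) + (v 2).val • (1:ZMod d) + k.val • (0:ZMod d) := by
        simp only [smul_eq_mul, nsmul_eq_mul, hc]
        ring
      have hdecomp : v = (-(v 1)).val • ![(1 : ZMod d),-1,0] + (v 2).val • ![(-1 : ZMod d),0,1]
          + k.val • ![(3 : ZMod d),0,0] := by
        funext i
        fin_cases i
        · exact e0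
        · exact e1
        · exact e2
      rw [hdecomp, ofv_add, ofv_add, ofv_nsmul, ofv_nsmul, ofv_nsmul]
      exact Subgroup.mul_mem _ (Subgroup.mul_mem _ (Subgroup.pow_mem _ m3 _)
        (Subgroup.pow_mem _ m3' _)) (Subgroup.pow_mem _ m1 _)
    have hxdecomp : x = ofv d v * SemidirectProduct.inr (φ := permAct d) x.right := by
      have : ofv d v = SemidirectProduct.inl x.left := by
        unfold ofv; congr 1
      rw [this, SemidirectProduct.inl_left_mul_inr_right]
    rw [hxdecomp]
    exact Subgroup.mul_mem _ hofv (hperm _)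

def a3Equiv (d : ℕ) : A3 d ≃ (Fin 3 → Multiplicative (ZMod d)) × Equiv.Perm (Fin 3) where
  toFun x := (x.left, x.right)
  invFun p := ⟨p.1, p.2⟩
  left_inv x := rfl
  right_inv p := rfl

instance (d : ℕ) [NeZero d] : Finite (A3 d) := Finite.of_equiv _ (a3Equiv d).symm

lemma card_A3 (d : ℕ) [NeZero d] : Nat.card (A3 d) = 6 * d ^ 3 := by
  rw [Nat.card_congr (a3Equiv d), Nat.card_prod, Nat.card_pi]
  have h1 : Nat.card (Multiplicative (ZMod d)) = d := by
    rw [Nat.card_congr (Multiplicative.toAdd (α := ZMod d)), Nat.card_zmod]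
  have h2 : Nat.card (Equiv.Perm (Fin 3)) = 6 := by
    rw [Nat.card_eq_fintype_card]
    decide
  rw [h2, Finset.prod_const, h1, Finset.card_univ, Fintype.card_fin]
  ring

lemma card_ker_sHom (d : ℕ) [NeZero d] (h3 : (3:ℕ) ∣ d) :
    Nat.card (sHom d h3).ker = 2 * d ^ 3 := by
  have hsurj : Function.Surjective (sHom d h3) := by
    intro y
    refine ⟨ofv d ![((toAdd y).val : ZMod d), 0, 0], ?_⟩
    show ofAdd _ = y
    simp only [ofv, SemidirectProduct.left_inl, toAdd_ofAdd, Fin.sum_univ_three,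
      Matrix.cons_val_zero, Matrix.cons_val_one, Matrix.head_cons, Matrix.cons_val_two,
      Matrix.tail_cons, add_zero]
    rw [map_natCast]
    rw [ZMod.natCast_val, ZMod.cast_id]
    rfl
  have h1 : Nat.card (A3 d) = Nat.card (A3 d ⧸ (sHom d h3).ker) * Nat.card (sHom d h3).ker :=
    Subgroup.card_eq_card_quotient_mul_card_subgroup _
  have h2 : Nat.card (A3 d ⧸ (sHom d h3).ker) = 3 := by
    rw [Nat.card_congr (QuotientGroup.quotientKerEquivOfSurjective _ hsurj).toEquiv]
    show Nat.card (Multiplicative (ZMod 3)) = 3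
    rw [Nat.card_congr (Multiplicative.toAdd (α := ZMod 3)), Nat.card_zmod]
  rw [card_A3, h2] at h1
  have hd : d ≠ 0 := NeZero.ne d
  omega

lemma card_ker_f (d : ℕ) [NeZero d] (ζ : ℂ) (hζ : IsPrimitiveRoot ζ d) (hz : ζ ^ d = 1) :
    Nat.card (toPGL3'.comp (PhiGL d ζ hz)).ker = d := by
  have e : ZMod d ≃ (toPGL3'.comp (PhiGL d ζ hz)).ker :=
    { toFun := fun a => ⟨ofv d (fun _ => a), (ker_iff d ζ hζ hz _).mpr ⟨a, rfl⟩⟩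
      invFun := fun x => toAdd ((x : A3 d).left 0)
      left_inv := fun a => rfl
      right_inv := fun x => by
        obtain ⟨a, ha⟩ := (ker_iff d ζ hζ hz _).mp x.2
        apply Subtype.ext
        show ofv d (fun _ => toAdd ((x : A3 d).left 0)) = (x : A3 d)
        rw [ha]
        rfl }
  rw [← Nat.card_congr e, Nat.card_zmod]

lemma kerf_le (d : ℕ) [NeZero d] (h3 : (3:ℕ) ∣ d) (ζ : ℂ) (hζ : IsPrimitiveRoot ζ d)
    (hz : ζ ^ d = 1) : (toPGL3'.comp (PhiGL d ζ hz)).ker ≤ (sHom d h3).ker := by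
  intro x hx
  obtain ⟨a, rfl⟩ := (ker_iff d ζ hζ hz _).mp hx
  show sHom d h3 _ = 1
  simp only [sHom, ofv, MonoidHom.coe_mk, OneHom.coe_mk, SemidirectProduct.left_inl,
    toAdd_ofAdd, Fin.sum_univ_three, ofAdd_eq_one]
  have h : ∀ y : ZMod 3, y + y + y = 0 := by decide
  rw [map_add, map_add]
  exact h _

lemma card_map_f (d : ℕ) [NeZero d] (h3 : (3:ℕ) ∣ d) (ζ : ℂ) (hζ : IsPrimitiveRoot ζ d)
    (hz : ζ ^ d = 1) :
    Nat.card (Subgroup.map (toPGL3'.comp (PhiGL d ζ hz)) (sHom d h3).ker) = 2 * d ^ 2 := by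
  set f := toPGL3'.comp (PhiGL d ζ hz) with hf
  set K := (sHom d h3).ker with hK
  have hle : f.ker ≤ K := kerf_le d h3 ζ hζ hz
  have h1 : Subgroup.map f K = (f.comp K.subtype).range := by
    rw [MonoidHom.range_comp, Subgroup.range_subtype]
  have h2 : Nat.card (Subgroup.map f K) = Nat.card (K ⧸ (f.comp K.subtype).ker) := by
    rw [h1, ← Nat.card_congr (QuotientGroup.quotientKerEquivRange _).toEquiv]
  have h3' : Nat.card K = Nat.card (K ⧸ (f.comp K.subtype).ker) * Nat.card (f.comp K.subtype).ker :=
    Subgroup.card_eq_card_quotient_mul_card_subgroup _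
  have h4 : Nat.card (f.comp K.subtype).ker = d := by
    have heq : (f.comp K.subtype).ker = f.ker.subgroupOf K := by
      rw [Subgroup.subgroupOf, MonoidHom.comap_ker]
    rw [heq, Nat.card_congr (Subgroup.subgroupOfEquivOfLe hle).toEquiv,
      card_ker_f d ζ hζ hz]
  rw [card_ker_sHom d h3, h4] at h3'
  have hd : d ≠ 0 := NeZero.ne d
  rw [h2]
  have hd3 : 2 * d ^ 3 = 2 * d ^ 2 * d := by ring
  rw [hd3] at h3'
  exact Nat.eq_of_mul_eq_mul_right (Nat.pos_of_ne_zero hd) h3'.symm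

/-- For `d = 3m`, `m ≥ 2`, `λ ≠ 0` with `λ³ ≠ 1`, the transformations `[ζ³X, Y, Z]`,
`[X, ζ³Y, Z]`, `[ζX, ζ⁻¹Y, Z]`, `[Y,Z,X]`, `[X,Z,Y]` (with `ζ` a primitive `d`-th root of
unity) each preserve `X^{3m} + Y^{3m} + Z^{3m} - 3λX^mY^mZ^m` up to a nonzero scalar, and
they generate a subgroup of `PGL(3,ℂ)` of order `2d²`. -/
theorem Fp_curve (m : ℕ) (hm : 2 ≤ m) (d : ℕ) (hd : d = 3 * m) (lam : ℂ)
    (h0 : lam ≠ 0) (h1 : lam ^ 3 ≠ 1)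
    (ζ : ℂ) (hζ : IsPrimitiveRoot ζ d)
    (g₁ g₂ g₃ g₄ g₅ : GL (Fin 3) ℂ)
    (hg₁ : (g₁ : Matrix (Fin 3) (Fin 3) ℂ) = !![ζ ^ 3, 0, 0; 0, 1, 0; 0, 0, 1])
    (hg₂ : (g₂ : Matrix (Fin 3) (Fin 3) ℂ) = !![1, 0, 0; 0, ζ ^ 3, 0; 0, 0, 1])
    (hg₃ : (g₃ : Matrix (Fin 3) (Fin 3) ℂ) = !![ζ, 0, 0; 0, ζ⁻¹, 0; 0, 0, 1])
    (hg₄ : (g₄ : Matrix (Fin 3) (Fin 3) ℂ) = !![0, 1, 0; 0, 0, 1; 1, 0, 0])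
    (hg₅ : (g₅ : Matrix (Fin 3) (Fin 3) ℂ) = !![1, 0, 0; 0, 0, 1; 0, 1, 0]) :
    (∀ g ∈ ({g₁, g₂, g₃, g₄, g₅} : Set (GL (Fin 3) ℂ)),
      ∃ c : ℂ, c ≠ 0 ∧
        actOn (g : Matrix (Fin 3) (Fin 3) ℂ)
            (X 0 ^ (3 * m) + X 1 ^ (3 * m) + X 2 ^ (3 * m) -
              MvPolynomial.C (3 * lam) * (X 0 ^ m * X 1 ^ m * X 2 ^ m)) =
          MvPolynomial.C c *
            (X 0 ^ (3 * m) + X 1 ^ (3 * m) + X 2 ^ (3 * m) -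
              MvPolynomial.C (3 * lam) * (X 0 ^ m * X 1 ^ m * X 2 ^ m))) ∧
    Nat.card
        (Subgroup.closure {toPGL3 g₁, toPGL3 g₂, toPGL3 g₃, toPGL3 g₄, toPGL3 g₅} :
          Subgroup PGL3) = 2 * d ^ 2 := by
  haveI : NeZero d := ⟨by omega⟩
  have h3 : (3:ℕ) ∣ d := ⟨m, hd⟩
  have hz : ζ ^ d = 1 := hζ.pow_eq_one
  have hz3m : ζ ^ (3 * m) = 1 := by rw [← hd]; exact hz
  have hzne : ζ ≠ 0 := by
    intro h; rw [h, zero_pow (by omega : d ≠ 0)] at hz; exact zero_ne_one hz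
  constructor
  · rintro g (rfl | rfl | rfl | rfl | rfl)
    · refine ⟨1, one_ne_zero, ?_⟩
      rw [hg₁]
      have hA : (C (ζ ^ 3) : MvPolynomial (Fin 3) ℂ) ^ (3*m) = 1 := by
        rw [← map_pow, ← pow_mul, show 3*(3*m) = 3*m*3 by ring, pow_mul, hz3m, one_pow,
          MvPolynomial.C_1]
      have hB : (C (ζ ^ 3) : MvPolynomial (Fin 3) ℂ) ^ m = 1 := by
        rw [← map_pow, ← pow_mul, mul_comm 3 m, mul_comm m 3, hz3m, MvPolynomial.C_1]
      simp only [actOn, map_add, map_sub, _root_.map_mul, map_pow, MvPolynomial.bind₁_X_right,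
        MvPolynomial.algHom_C, Fin.sum_univ_three, MvPolynomial.algebraMap_eq]
      simp only [Matrix.of_apply, Matrix.cons_val', Matrix.cons_val_zero, Matrix.cons_val_one,
        Matrix.head_cons, Matrix.empty_val', Matrix.cons_val_fin_one, Matrix.head_fin_const,
        Matrix.cons_val_two, Matrix.tail_cons, map_zero, zero_mul, add_zero, zero_add,
        _root_.map_one, one_mul, mul_one]
      linear_combination (X 0 : MvPolynomial (Fin 3) ℂ)^(3*m) * hA -
        C 3 * C lam * ((X 0:MvPolynomial (Fin 3) ℂ)^m * X 1 ^m * X 2^m) * hB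
    · refine ⟨1, one_ne_zero, ?_⟩
      rw [hg₂]
      have hA : (C (ζ ^ 3) : MvPolynomial (Fin 3) ℂ) ^ (3*m) = 1 := by
        rw [← map_pow, ← pow_mul, show 3*(3*m) = 3*m*3 by ring, pow_mul, hz3m, one_pow,
          MvPolynomial.C_1]
      have hB : (C (ζ ^ 3) : MvPolynomial (Fin 3) ℂ) ^ m = 1 := by
        rw [← map_pow, ← pow_mul, mul_comm 3 m, mul_comm m 3, hz3m, MvPolynomial.C_1]
      simp only [actOn, map_add, map_sub, _root_.map_mul, map_pow, MvPolynomial.bind₁_X_right,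
        MvPolynomial.algHom_C, Fin.sum_univ_three, MvPolynomial.algebraMap_eq]
      simp only [Matrix.of_apply, Matrix.cons_val', Matrix.cons_val_zero, Matrix.cons_val_one,
        Matrix.head_cons, Matrix.empty_val', Matrix.cons_val_fin_one, Matrix.head_fin_const,
        Matrix.cons_val_two, Matrix.tail_cons, map_zero, zero_mul, add_zero, zero_add,
        _root_.map_one, one_mul, mul_one]
      linear_combination (X 1 : MvPolynomial (Fin 3) ℂ)^(3*m) * hA -
        C 3 * C lam * ((X 0:MvPolynomial (Fin 3) ℂ)^m * X 1 ^m * X 2^m) * hB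
    · refine ⟨1, one_ne_zero, ?_⟩
      rw [hg₃]
      have hA : (C ζ : MvPolynomial (Fin 3) ℂ) ^ (3*m) = 1 := by
        rw [← map_pow, hz3m, MvPolynomial.C_1]
      have hB : (C ζ⁻¹ : MvPolynomial (Fin 3) ℂ) ^ (3*m) = 1 := by
        rw [← map_pow, inv_pow, hz3m, inv_one, MvPolynomial.C_1]
      have hC : (C ζ : MvPolynomial (Fin 3) ℂ) ^ m * (C ζ⁻¹ : MvPolynomial (Fin 3) ℂ) ^ m
          = 1 := by
        rw [← map_pow, ← map_pow, ← _root_.map_mul, ← mul_pow, mul_inv_cancel₀ hzne, one_pow,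
          MvPolynomial.C_1]
      simp only [actOn, map_add, map_sub, _root_.map_mul, map_pow, MvPolynomial.bind₁_X_right,
        MvPolynomial.algHom_C, Fin.sum_univ_three, MvPolynomial.algebraMap_eq]
      simp only [Matrix.of_apply, Matrix.cons_val', Matrix.cons_val_zero, Matrix.cons_val_one,
        Matrix.head_cons, Matrix.empty_val', Matrix.cons_val_fin_one, Matrix.head_fin_const,
        Matrix.cons_val_two, Matrix.tail_cons, map_zero, zero_mul, add_zero, zero_add,
        _root_.map_one, one_mul, mul_one]
      linear_combination (X 0 : MvPolynomial (Fin 3) ℂ)^(3*m) * hA +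
        (X 1 : MvPolynomial (Fin 3) ℂ)^(3*m) * hB -
        C 3 * C lam * ((X 0:MvPolynomial (Fin 3) ℂ)^m * X 1 ^m * X 2^m) * hC
    · refine ⟨1, one_ne_zero, ?_⟩
      rw [hg₄]
      simp only [actOn, map_add, map_sub, _root_.map_mul, map_pow, MvPolynomial.bind₁_X_right,
        MvPolynomial.algHom_C, Fin.sum_univ_three, MvPolynomial.algebraMap_eq]
      simp only [Matrix.of_apply, Matrix.cons_val', Matrix.cons_val_zero, Matrix.cons_val_one,
        Matrix.head_cons, Matrix.empty_val', Matrix.cons_val_fin_one, Matrix.head_fin_const,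
        Matrix.cons_val_two, Matrix.tail_cons, map_zero, zero_mul, add_zero, zero_add,
        _root_.map_one, one_mul, mul_one]
      ring
    · refine ⟨1, one_ne_zero, ?_⟩
      rw [hg₅]
      simp only [actOn, map_add, map_sub, _root_.map_mul, map_pow, MvPolynomial.bind₁_X_right,
        MvPolynomial.algHom_C, Fin.sum_univ_three, MvPolynomial.algebraMap_eq]
      simp only [Matrix.of_apply, Matrix.cons_val', Matrix.cons_val_zero, Matrix.cons_val_one,
        Matrix.head_cons, Matrix.empty_val', Matrix.cons_val_fin_one, Matrix.head_fin_const,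
        Matrix.cons_val_two, Matrix.tail_cons, map_zero, zero_mul, add_zero, zero_add,
        _root_.map_one, one_mul, mul_one]
      ring
  · -- group order
    have hval : ∀ k : ℕ, k < d → ((k : ZMod d)).val = k := fun k hk => by
      rw [ZMod.val_natCast, Nat.mod_eq_of_lt hk]
    have hval3 : ((3 : ZMod d)).val = 3 := by
      rw [show (3:ZMod d) = ((3:ℕ):ZMod d) by norm_cast]; exact hval 3 (by omega)
    have hval1 : ((1 : ZMod d)).val = 1 := by
      rw [show (1:ZMod d) = ((1:ℕ):ZMod d) by norm_cast]; exact hval 1 (by omega)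
    have hvalneg : ζ ^ ((-1 : ZMod d)).val = ζ⁻¹ := by
      obtain ⟨e, rfl⟩ : ∃ e, d = e + 1 := ⟨d - 1, by omega⟩
      rw [ZMod.val_neg_one]
      refine inv_eq_of_mul_eq_one_right ?_ |>.symm
      rw [← pow_succ']
      exact hz
    have e₁ : g₁ = PhiGL d ζ hz (ofv d ![3,0,0]) := by
      apply Units.ext
      rw [PhiGL_coe, hg₁]
      ext i j
      fin_cases i <;> fin_cases j <;>
        simp [mmat, ofv, chi, hval3, ZMod.val_zero, Matrix.vecHead, Matrix.vecTail]
    have e₂ : g₂ = PhiGL d ζ hz (ofv d ![0,3,0]) := by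
      apply Units.ext
      rw [PhiGL_coe, hg₂]
      ext i j
      fin_cases i <;> fin_cases j <;>
        simp [mmat, ofv, chi, hval3, ZMod.val_zero, Matrix.vecHead, Matrix.vecTail]
    have e₃ : g₃ = PhiGL d ζ hz (ofv d ![1,-1,0]) := by
      apply Units.ext
      rw [PhiGL_coe, hg₃]
      ext i j
      fin_cases i <;> fin_cases j <;>
        simp [mmat, ofv, chi, hval1, hvalneg, ZMod.val_zero, Matrix.vecHead, Matrix.vecTail]
    have e₄ : g₄ = PhiGL d ζ hz (SemidirectProduct.inr c4) := by
      apply Units.ext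
      rw [PhiGL_coe, hg₄]
      ext i j
      fin_cases i <;> fin_cases j <;>
        simp [mmat, chi, c4, ZMod.val_zero, Matrix.vecHead, Matrix.vecTail] <;>
        first
          | rfl
          | (rw [if_pos (by decide)] <;> decide)
          | (rw [if_neg (by decide)] <;> decide)
          | (norm_num <;> decide)
    have e₅ : g₅ = PhiGL d ζ hz (SemidirectProduct.inr s5) := by
      apply Units.ext
      rw [PhiGL_coe, hg₅]
      ext i j
      fin_cases i <;> fin_cases j <;>
        simp [mmat, chi, s5, ZMod.val_zero, Matrix.vecHead, Matrix.vecTail] <;>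
        first
          | rfl
          | (rw [if_pos (by decide)] <;> decide)
          | (rw [if_neg (by decide)] <;> decide)
          | (norm_num <;> decide)
    have hset : ({toPGL3 g₁, toPGL3 g₂, toPGL3 g₃, toPGL3 g₄, toPGL3 g₅} : Set PGL3) =
        (toPGL3'.comp (PhiGL d ζ hz)) '' {ofv d ![3,0,0], ofv d ![0,3,0], ofv d ![1,-1,0],
          SemidirectProduct.inr c4, SemidirectProduct.inr s5} := by
      rw [Set.image_insert_eq, Set.image_insert_eq, Set.image_insert_eq, Set.image_insert_eq,
        Set.image_singleton]
      rw [e₁, e₂, e₃, e₄, e₅]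
      rfl
    rw [hset, ← MonoidHom.map_closure, closure_eq_ker d h3]
    exact card_map_f d h3 ζ hζ hz
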